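/- Small-neighbor estimate: let ψ be an eigenfunction of H_Λ(A) with eigenvalue E ∈ [0,4], x₀ a maximum point with |ψ(x₀)| = M, and suppose ỹ₀ ∈ Λ is a nearest neighbor of x₀ with |ψ(ỹ₀)| ≤ εM for some ε ≥ 0. Then every other nearest neighbor y ∈ Λ of x₀ satisfies |ψ(y)| ≥ (2 − E − ε) M. -/

import Mathlib

open scoped Classical

/-- `x` and `y` are nearest neighbors in `ℤ²` (`|x - y| = 1`). -/
def edge (x y : ℤ × ℤ) : Prop := (x.1 - y.1) ^ 2 + (x.2 - y.2) ^ 2 = 1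

/-- The four nearest neighbors of a point of `ℤ²`. -/
def nbrs (x : ℤ × ℤ) : Finset (ℤ × ℤ) :=
  {x + (1, 0), x - (1, 0), x + (0, 1), x - (0, 1)}

/-- The finite-volume magnetic Schrödinger operator with simple boundary conditions:
`(H_Λ(A) ψ)(x) = 4 ψ(x) - Σ_{y ∈ Λ, |x-y|=1} e^{iA(x,y)} ψ(y)`. -/
noncomputable def Ham (Λ : Finset (ℤ × ℤ)) (A : ℤ × ℤ → ℤ × ℤ → ℝ)
    (ψ : ℤ × ℤ → ℂ) (x : ℤ × ℤ) : ℂ :=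
  4 * ψ x - ∑ y ∈ Λ.filter (fun y => edge x y), Complex.exp (Complex.I * (A x y)) * ψ y

/-- The current of a wavefunction `ψ` along the directed edge `(x,y)`:
`J_ψ(x,y) = -2 Re( conj(ψ x) · i e^{iA(x,y)} ψ y )`. -/
noncomputable def cur (A : ℤ × ℤ → ℤ × ℤ → ℝ) (ψ : ℤ × ℤ → ℂ) (x y : ℤ × ℤ) : ℝ :=
  -2 * ((starRingEnd ℂ) (ψ x) * Complex.I * Complex.exp (Complex.I * (A x y)) * ψ y).re

lemma edge_mem_nbrs {x y : ℤ × ℤ} (h : edge x y) : y ∈ nbrs x := by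
  obtain ⟨x1, x2⟩ := x
  obtain ⟨y1, y2⟩ := y
  unfold edge at h
  simp only at h
  have ha2 : (x1 - y1) ^ 2 ≤ 1 := by nlinarith [sq_nonneg (x2 - y2)]
  have hb2 : (x2 - y2) ^ 2 ≤ 1 := by nlinarith [sq_nonneg (x1 - y1)]
  have h1 : x1 - y1 = -1 ∨ x1 - y1 = 0 ∨ x1 - y1 = 1 := by
    have : -1 ≤ x1 - y1 := by nlinarith [sq_nonneg (x1 - y1 + 1)]
    have : x1 - y1 ≤ 1 := by nlinarith [sq_nonneg (x1 - y1 - 1)]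
    omega
  have h2 : x2 - y2 = -1 ∨ x2 - y2 = 0 ∨ x2 - y2 = 1 := by
    have : -1 ≤ x2 - y2 := by nlinarith [sq_nonneg (x2 - y2 + 1)]
    have : x2 - y2 ≤ 1 := by nlinarith [sq_nonneg (x2 - y2 - 1)]
    omega
  simp only [nbrs, Finset.mem_insert, Finset.mem_singleton, Prod.ext_iff, Prod.fst_add,
    Prod.snd_add, Prod.fst_sub, Prod.snd_sub, Prod.mk.injEq]
  rcases h1 with h1 | h1 | h1 <;> rcases h2 with h2 | h2 | h2 <;>
    rw [h1, h2] at h <;> omega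

lemma card_nbrs_le (x : ℤ × ℤ) : (nbrs x).card ≤ 4 := by
  unfold nbrs
  refine le_trans (Finset.card_insert_le _ _) ?_
  refine Nat.succ_le_succ ?_
  refine le_trans (Finset.card_insert_le _ _) ?_
  refine Nat.succ_le_succ ?_
  refine le_trans (Finset.card_insert_le _ _) ?_
  simp

/-- same setting; if moreover a nearest neighbor `y₀' ∈ Λ` of `x₀`
satisfies `|ψ(y₀')| ≤ ε M` (`ε ≥ 0`), then every other nearest neighbor `y ∈ Λ` of `x₀`
satisfies `|ψ(y)| ≥ (2 - E - ε) M`. -/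
theorem stmt10 (Λ : Finset (ℤ × ℤ)) (A : ℤ × ℤ → ℤ × ℤ → ℝ)
    (hA : ∀ x y, edge x y → A x y = -A y x)
    (ψ : ℤ × ℤ → ℂ) (E M ε : ℝ)
    (hout : ∀ x ∉ Λ, ψ x = 0)
    (heig : ∀ x ∈ Λ, Ham Λ A ψ x = (E : ℂ) * ψ x)
    (hE0 : 0 ≤ E) (hE4 : E ≤ 4) (hε : 0 ≤ ε)
    (x₀ : ℤ × ℤ) (hx₀ : x₀ ∈ Λ) (hM : ‖ψ x₀‖ = M)
    (hmax : ∀ x ∈ Λ, ‖ψ x‖ ≤ M)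
    (y₀' : ℤ × ℤ) (hy₀' : y₀' ∈ Λ) (hedge : edge x₀ y₀')
    (hsmall : ‖ψ y₀'‖ ≤ ε * M) :
    ∀ y ∈ Λ, edge x₀ y → y ≠ y₀' → (2 - E - ε) * M ≤ ‖ψ y‖ := by
  intro y hy hedgey hne
  have hM0 : 0 ≤ M := hM ▸ norm_nonneg _
  rcases eq_or_lt_of_le hM0 with hM0' | hMpos
  · have h0 : (2 - E - ε) * M = 0 := by rw [← hM0']; ring
    rw [h0]; exact norm_nonneg _
  set S := Λ.filter (fun z => edge x₀ z) with hS
  have hyS : y ∈ S := Finset.mem_filter.mpr ⟨hy, hedgey⟩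
  have hy0S : y₀' ∈ S := Finset.mem_filter.mpr ⟨hy₀', hedge⟩
  -- eigenvalue equation at x₀
  have key : ∑ z ∈ S, Complex.exp (Complex.I * (A x₀ z)) * ψ z = ((4 : ℂ) - (E : ℂ)) * ψ x₀ := by
    have h := heig x₀ hx₀
    unfold Ham at h
    rw [← hS] at h
    linear_combination -h
  -- real-part identity
  have hre : (4 - E) * M ^ 2
      = ∑ z ∈ S, ((starRingEnd ℂ) (ψ x₀) * (Complex.exp (Complex.I * (A x₀ z)) * ψ z)).re := by
    have h1 := congrArg (fun w => ((starRingEnd ℂ) (ψ x₀) * w).re) key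
    rw [Finset.mul_sum, Complex.re_sum] at h1
    rw [h1]
    have h2 : (starRingEnd ℂ) (ψ x₀) * (((4 : ℂ) - (E : ℂ)) * ψ x₀)
        = ((4 : ℂ) - (E : ℂ)) * (Complex.normSq (ψ x₀) : ℂ) := by
      rw [← Complex.mul_conj]; ring
    rw [h2]
    have h3 : Complex.normSq (ψ x₀) = M ^ 2 := by
      rw [Complex.normSq_eq_norm_sq, hM]
    rw [h3]
    simp only [Complex.mul_re, Complex.sub_re, Complex.sub_im, Complex.ofReal_re,
      Complex.ofReal_im, ← Complex.ofReal_pow]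
    norm_num
  -- termwise bound
  have hterm : ∀ z ∈ S,
      ((starRingEnd ℂ) (ψ x₀) * (Complex.exp (Complex.I * (A x₀ z)) * ψ z)).re
        ≤ M * ‖ψ z‖ := by
    intro z _
    refine le_trans (Complex.re_le_norm _) ?_
    rw [norm_mul, norm_mul, Complex.norm_conj, hM, Complex.norm_exp]
    have : (Complex.I * (A x₀ z : ℂ)).re = 0 := by
      simp [Complex.mul_re]
    rw [this, Real.exp_zero, one_mul]
  -- sum of abs bound
  have hcardS : S.card ≤ 4 := by
    refine le_trans (Finset.card_le_card ?_) (card_nbrs_le x₀)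
    intro z hz
    exact edge_mem_nbrs (Finset.mem_filter.mp hz).2
  have hy0' : y₀' ∈ S.erase y := Finset.mem_erase.mpr ⟨fun h => hne h.symm, hy0S⟩
  set T := (S.erase y).erase y₀' with hT
  have hTsum : ∑ z ∈ T, ‖ψ z‖ ≤ 2 * M := by
    have hcardT : T.card ≤ 2 := by
      have e1 : T.card = (S.erase y).card - 1 := Finset.card_erase_of_mem hy0'
      have e2 : (S.erase y).card = S.card - 1 := Finset.card_erase_of_mem hyS
      omega
    calc ∑ z ∈ T, ‖ψ z‖ ≤ T.card • M := by
          refine Finset.sum_le_card_nsmul _ _ _ ?_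
          intro z hz
          have hzS : z ∈ S := Finset.mem_of_mem_erase (Finset.mem_of_mem_erase hz)
          exact hmax z (Finset.mem_filter.mp hzS).1
      _ ≤ 2 * M := by
          rw [nsmul_eq_mul]
          have : (T.card : ℝ) ≤ 2 := by exact_mod_cast hcardT
          nlinarith
  have hsplit : ∑ z ∈ S, ‖ψ z‖
      ≤ ‖ψ y‖ + ε * M + 2 * M := by
    rw [← Finset.add_sum_erase S _ hyS, ← Finset.add_sum_erase _ _ hy0']
    rw [← hT]
    linarith
  -- put together
  have hmain : (4 - E) * M ^ 2 ≤ M * (‖ψ y‖ + ε * M + 2 * M) := by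
    rw [hre]
    calc ∑ z ∈ S, ((starRingEnd ℂ) (ψ x₀) * (Complex.exp (Complex.I * (A x₀ z)) * ψ z)).re
        ≤ ∑ z ∈ S, M * ‖ψ z‖ := Finset.sum_le_sum hterm
      _ = M * ∑ z ∈ S, ‖ψ z‖ := by rw [Finset.mul_sum]
      _ ≤ M * (‖ψ y‖ + ε * M + 2 * M) := by
          exact mul_le_mul_of_nonneg_left hsplit hM0
  nlinarith [hMpos, hmain]
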